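/- arXiv:1011.5648 — 2 statements merged into one kernel-verified Lean document; each statement's English description precedes it below -/
import Mathlib

section
/- Let n ∈ ℕ, A, V ∈ ℂ^{n×n} with V invertible, ρ ∈ L¹(ℝ) ∩ L^∞(ℝ) nonnegative, and s ∈ (0,1). Then for every λ > 0, ∫_ℝ |det(A + rV)|^{-s/n} ρ(r) dr ≤ |det V|^{-s/n} (λ^{-s} ‖ρ‖_{L¹} + 2λ^{1-s}/(1-s) ‖ρ‖_∞). -/
open MeasureTheory Polynomial Set

open MeasureTheory Polynomial

lemma eval_charpoly' {n : ℕ} (M : Matrix (Fin n) (Fin n) ℂ) (r : ℂ) :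
    M.charpoly.eval r = (Matrix.scalar (Fin n) r - M).det := by
  rw [Matrix.charpoly, eval_det, Matrix.matPolyEquiv_charmatrix]
  simp

lemma det_factor (n : ℕ) (hn : 0 < n) (A V : Matrix (Fin n) (Fin n) ℂ) (hV : IsUnit V.det) :
    ∃ x : Fin n → ℝ, ∀ r : ℝ,
      ‖V.det‖ * ∏ j, |r - x j| ≤ ‖(A + (r : ℂ) • V).det‖ := by
  classical
  set B := V⁻¹ * A with hB
  set q := (-B).charpoly with hq
  have hmonic : q.Monic := Matrix.charpoly_monic _
  have hdeg : q.natDegree = n := by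
    rw [hq, Matrix.charpoly_natDegree_eq_dim, Fintype.card_fin]
  have hsplits : Splits q := IsAlgClosed.splits q
  have hcard : q.roots.card = n := by
    rw [← hdeg]; exact (Polynomial.splits_iff_card_roots.mp hsplits)
  have hfac : q = (q.roots.map fun z => X - C z).prod :=
    hsplits.eq_prod_roots_of_monic hmonic
  set l := q.roots.toList with hl
  have hlen : l.length = n := by rw [hl, Multiset.length_toList, hcard]
  set z : Fin n → ℂ := fun j => l.get (Fin.cast hlen.symm j) with hz
  refine ⟨fun j => (z j).re, fun r => ?_⟩
  have hscal : Matrix.scalar (Fin n) (r : ℂ) = (r : ℂ) • (1 : Matrix (Fin n) (Fin n) ℂ) := by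
    rw [Matrix.scalar_apply, Matrix.smul_one_eq_diagonal]
  have hdet : (A + (r : ℂ) • V).det = V.det * q.eval (r : ℂ) := by
    rw [eval_charpoly', sub_neg_eq_add, hscal]
    have h1 : A + (r : ℂ) • V = V * ((r : ℂ) • 1 + B) := by
      rw [Matrix.mul_add, hB, ← Matrix.mul_assoc, Matrix.mul_nonsing_inv V hV,
        Matrix.one_mul, Matrix.mul_smul, Matrix.mul_one, add_comm]
    rw [h1, Matrix.det_mul]
  have heval : q.eval (r : ℂ) = ∏ j, ((r : ℂ) - z j) := by
    conv_lhs => rw [hfac]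
    rw [eval_multiset_prod]
    have : q.roots = (l : Multiset ℂ) := (Multiset.coe_toList _).symm
    rw [this]
    rw [Multiset.map_map, Multiset.map_coe, Multiset.prod_coe]
    have h2 : l = List.ofFn l.get := (List.ofFn_get l).symm
    conv_lhs => rw [h2, List.map_ofFn, List.prod_ofFn]
    rw [← Fin.prod_congr' _ hlen]
    simp [hz, Function.comp]
  have habs : ‖(A + (r : ℂ) • V).det‖
      = ‖V.det‖ * ∏ j, ‖(r : ℂ) - z j‖ := by
    rw [hdet, norm_mul, heval, norm_prod]
  rw [habs]
  refine mul_le_mul_of_nonneg_left ?_ (norm_nonneg _)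
  refine Finset.prod_le_prod (fun j _ => abs_nonneg _) (fun j _ => ?_)
  have : |r - (z j).re| = |((r : ℂ) - z j).re| := by simp
  rw [this]
  exact Complex.abs_re_le_norm _

open MeasureTheory Set

lemma root_bound (ρ : ℝ → ℝ) (hρmeas : Measurable ρ) (hρint : Integrable ρ)
    (hρnonneg : ∀ r, 0 ≤ ρ r) (Cinf : ℝ) (hCinf : ∀ᵐ r ∂(volume : Measure ℝ), ρ r ≤ Cinf)
    (s lam : ℝ) (hs : s ∈ Set.Ioo (0:ℝ) 1) (hlam : 0 < lam) (x : ℝ) :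
    Integrable (fun r => |r - x| ^ (-s) * ρ r) ∧
    ∫ r : ℝ, |r - x| ^ (-s) * ρ r
      ≤ lam ^ (-s) * (∫ r : ℝ, ρ r) + 2 * lam ^ (1 - s) / (1 - s) * Cinf := by
  obtain ⟨hs0, hs1⟩ := hs
  have hCinf0 : 0 ≤ Cinf := by
    obtain ⟨r, hr⟩ := hCinf.exists
    exact le_trans (hρnonneg r) hr
  set φ : ℝ → ℝ := fun r => |r - x| ^ (-s) with hφ
  have hφnonneg : ∀ r, 0 ≤ φ r := fun r => Real.rpow_nonneg (abs_nonneg _) _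
  have hφmeas : Measurable φ := by
    have heq : φ = fun r => if r = x then 0 else Real.exp (Real.log |r - x| * (-s)) := by
      funext r
      by_cases hr : r = x
      · simp [hφ, hr, Real.zero_rpow (neg_ne_zero.mpr hs0.ne')]
      · have hpos : 0 < |r - x| := abs_pos.mpr (sub_ne_zero.mpr hr)
        simp only [hφ, if_neg hr]
        rw [Real.rpow_def_of_pos hpos]
    rw [heq]
    exact Measurable.ite (measurableSet_eq)
      measurable_const (((measurable_id.sub_const x).abs.log).mul_const _).exp
  set S : Set ℝ := Ioo (x - lam) (x + lam) with hS
  have hSmeas : MeasurableSet S := measurableSet_Ioo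
  -- integrability of φ on pieces
  have hright : IntegrableOn φ (Ioc x (x + lam)) := by
    have h1 : IntervalIntegrable (fun t : ℝ => t ^ (-s)) volume 0 lam :=
      intervalIntegral.intervalIntegrable_rpow' (by linarith)
    have h2 := h1.comp_sub_right x
    rw [zero_add, add_comm lam x,
      intervalIntegrable_iff_integrableOn_Ioc_of_le (by linarith)] at h2
    refine h2.congr_fun (fun r hr => ?_) measurableSet_Ioc
    rw [hφ]
    simp only
    rw [abs_of_nonneg (by linarith [hr.1] : (0:ℝ) ≤ r - x)]
  have hleft : IntegrableOn φ (Ioc (x - lam) x) := by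
    have h1 : IntervalIntegrable (fun t : ℝ => t ^ (-s)) volume 0 lam :=
      intervalIntegral.intervalIntegrable_rpow' (by linarith)
    have h2 := (h1.comp_sub_left x).symm
    rw [sub_zero, intervalIntegrable_iff_integrableOn_Ioc_of_le (by linarith : x - lam ≤ x)] at h2
    refine h2.congr_fun (fun r hr => ?_) measurableSet_Ioc
    rw [hφ]
    simp only
    rw [abs_sub_comm, abs_of_nonneg (by linarith [hr.2] : (0:ℝ) ≤ x - r)]
  have hIoc : IntegrableOn φ (Ioc (x - lam) (x + lam)) := by
    rw [← Set.Ioc_union_Ioc_eq_Ioc (show x - lam ≤ x by linarith) (show x ≤ x + lam by linarith)]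
    exact hleft.union hright
  have hφS : IntegrableOn φ S := hIoc.mono_set Set.Ioo_subset_Ioc_self
  -- value of integral of φ on S
  have hval : ∫ r in Ioc (x - lam) (x + lam), φ r = 2 * lam ^ (1 - s) / (1 - s) := by
    rw [← Set.Ioc_union_Ioc_eq_Ioc (by linarith : x - lam ≤ x) (by linarith : x ≤ x + lam),
      setIntegral_union (Set.Ioc_disjoint_Ioc_of_le le_rfl) measurableSet_Ioc hleft hright]
    have hbase : ∫ t in (0:ℝ)..lam, t ^ (-s) = lam ^ (1 - s) / (1 - s) := by
      rw [integral_rpow (Or.inl (by linarith))]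
      rw [Real.zero_rpow (by intro hc; rw [show -s + 1 = 1 - s by ring] at hc; linarith : -s + 1 ≠ 0)]
      rw [show -s + 1 = 1 - s by ring]
      ring
    have e1 : ∫ r in Ioc x (x + lam), φ r = lam ^ (1 - s) / (1 - s) := by
      have : ∫ r in Ioc x (x + lam), φ r = ∫ r in Ioc x (x + lam), (r - x) ^ (-s) := by
        refine setIntegral_congr_fun measurableSet_Ioc (fun r hr => ?_)
        rw [hφ]; simp only
        rw [abs_of_nonneg (by linarith [hr.1] : (0:ℝ) ≤ r - x)]
      have e1' : (∫ r in x..(x + lam), (r - x) ^ (-s))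
          = ∫ t in (x - x)..(x + lam - x), t ^ (-s) :=
        intervalIntegral.integral_comp_sub_right (fun t => t ^ (-s)) x
      simp only [sub_self, add_sub_cancel_left] at e1'
      rw [this, ← intervalIntegral.integral_of_le (by linarith : x ≤ x + lam), e1', hbase]
    have e2 : ∫ r in Ioc (x - lam) x, φ r = lam ^ (1 - s) / (1 - s) := by
      have : ∫ r in Ioc (x - lam) x, φ r = ∫ r in Ioc (x - lam) x, (x - r) ^ (-s) := by
        refine setIntegral_congr_fun measurableSet_Ioc (fun r hr => ?_)
        rw [hφ]; simp only
        rw [abs_sub_comm, abs_of_nonneg (by linarith [hr.2] : (0:ℝ) ≤ x - r)]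
      have e2' : (∫ r in (x - lam)..x, (x - r) ^ (-s))
          = ∫ t in (x - x)..(x - (x - lam)), t ^ (-s) :=
        intervalIntegral.integral_comp_sub_left (fun t => t ^ (-s)) x
      simp only [sub_self, sub_sub_cancel] at e2'
      rw [this, ← intervalIntegral.integral_of_le (by linarith : x - lam ≤ x), e2', hbase]
    rw [e1, e2]; ring
  have hvalS : ∫ r in S, φ r ≤ 2 * lam ^ (1 - s) / (1 - s) := by
    rw [← hval]
    refine setIntegral_mono_set hIoc ?_ (HasSubset.Subset.eventuallyLE Set.Ioo_subset_Ioc_self)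
    exact Filter.Eventually.of_forall fun r => hφnonneg r
  -- integrability of the product
  set h : ℝ → ℝ := fun r => φ r * ρ r with hh
  have hhnonneg : ∀ r, 0 ≤ h r := fun r => mul_nonneg (hφnonneg r) (hρnonneg r)
  set D : ℝ → ℝ := fun r => lam ^ (-s) * ρ r + Cinf * S.indicator φ r with hD
  have hDint : Integrable D := by
    refine (hρint.const_mul _).add (Integrable.const_mul ?_ _)
    exact (integrable_indicator_iff hSmeas).2 hφS
  have hbound : ∀ᵐ r ∂(volume : Measure ℝ), ‖h r‖ ≤ D r := by
    filter_upwards [hCinf] with r hr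
    rw [Real.norm_of_nonneg (hhnonneg r)]
    rcases lt_or_ge (|r - x|) lam with hc | hc
    · have hrS : r ∈ S := by
        rw [abs_lt] at hc
        constructor <;> [linarith [hc.1]; linarith [hc.2]]
      rw [hD]
      simp only
      rw [Set.indicator_of_mem hrS]
      have : h r ≤ Cinf * φ r := by
        rw [hh]; simp only
        rw [mul_comm Cinf (φ r)]
        exact mul_le_mul_of_nonneg_left hr (hφnonneg r)
      have h2 : 0 ≤ lam ^ (-s) * ρ r :=
        mul_nonneg (Real.rpow_nonneg hlam.le _) (hρnonneg r)
      linarith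
    · have hφle : φ r ≤ lam ^ (-s) :=
        Real.rpow_le_rpow_of_nonpos hlam hc (by linarith)
      have h1 : h r ≤ lam ^ (-s) * ρ r :=
        mul_le_mul_of_nonneg_right hφle (hρnonneg r)
      have h2 : 0 ≤ Cinf * S.indicator φ r :=
        mul_nonneg hCinf0 (Set.indicator_nonneg (fun r _ => hφnonneg r) r)
      rw [hD]; simp only; linarith
  have hhmeas : Measurable h := hφmeas.mul hρmeas
  have hhint : Integrable h := Integrable.mono' hDint hhmeas.aestronglyMeasurable hbound
  refine ⟨hhint, ?_⟩
  -- split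
  rw [← integral_add_compl hSmeas hhint]
  have p1 : ∫ r in S, h r ≤ 2 * lam ^ (1 - s) / (1 - s) * Cinf := by
    have step : ∫ r in S, h r ≤ ∫ r in S, Cinf * φ r := by
      refine setIntegral_mono_ae_restrict hhint.integrableOn (hφS.const_mul _) ?_
      refine ae_restrict_of_ae ?_
      filter_upwards [hCinf] with r hr
      rw [hh]; simp only
      rw [mul_comm Cinf (φ r)]
      exact mul_le_mul_of_nonneg_left hr (hφnonneg r)
    calc ∫ r in S, h r ≤ ∫ r in S, Cinf * φ r := step
      _ = Cinf * ∫ r in S, φ r := by rw [integral_const_mul]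
      _ ≤ Cinf * (2 * lam ^ (1 - s) / (1 - s)) := mul_le_mul_of_nonneg_left hvalS hCinf0
      _ = 2 * lam ^ (1 - s) / (1 - s) * Cinf := by ring
  have p2 : ∫ r in Sᶜ, h r ≤ lam ^ (-s) * ∫ r : ℝ, ρ r := by
    have step : ∫ r in Sᶜ, h r ≤ ∫ r in Sᶜ, lam ^ (-s) * ρ r := by
      refine setIntegral_mono_on hhint.integrableOn ((hρint.const_mul _).integrableOn)
        hSmeas.compl (fun r hr => ?_)
      have hc : lam ≤ |r - x| := by
        rw [hS] at hr
        simp only [Set.mem_compl_iff, Set.mem_Ioo, not_and, not_lt] at hr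
        rcases le_or_gt r (x - lam) with h1 | h1
        · rw [abs_sub_comm, abs_of_nonneg (by linarith)]; linarith
        · have := hr h1; rw [abs_of_nonneg (by linarith)]; linarith
      have hφle : φ r ≤ lam ^ (-s) :=
        Real.rpow_le_rpow_of_nonpos hlam hc (by linarith)
      exact mul_le_mul_of_nonneg_right hφle (hρnonneg r)
    calc ∫ r in Sᶜ, h r ≤ ∫ r in Sᶜ, lam ^ (-s) * ρ r := step
      _ = lam ^ (-s) * ∫ r in Sᶜ, ρ r := by rw [integral_const_mul]
      _ ≤ lam ^ (-s) * ∫ r : ℝ, ρ r := by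
          refine mul_le_mul_of_nonneg_left ?_ (Real.rpow_nonneg hlam.le _)
          exact setIntegral_le_integral hρint
            (Filter.Eventually.of_forall fun r => hρnonneg r)
  linarith

theorem determinant_averaging_bound
    (n : ℕ) (hn : 0 < n) (A V : Matrix (Fin n) (Fin n) ℂ) (hV : IsUnit V.det)
    (ρ : ℝ → ℝ) (hρmeas : Measurable ρ) (hρint : Integrable ρ)
    (hρnonneg : ∀ r, 0 ≤ ρ r) (Cinf : ℝ)
    (hCinf : ∀ᵐ r ∂(volume : Measure ℝ), ρ r ≤ Cinf)
    (s lam : ℝ) (hs : s ∈ Set.Ioo (0:ℝ) 1) (hlam : 0 < lam) :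
    ∫ r : ℝ, ‖(A + (r : ℂ) • V).det‖ ^ (-(s / (n : ℝ))) * ρ r
      ≤ ‖V.det‖ ^ (-(s / (n : ℝ))) *
        (lam ^ (-s) * (∫ r : ℝ, ρ r) + 2 * lam ^ (1 - s) / (1 - s) * Cinf) := by
  obtain ⟨hs0, hs1⟩ := hs
  have hn' : (0:ℝ) < (n:ℝ) := by exact_mod_cast hn
  obtain ⟨x, hx⟩ := det_factor n hn A V hV
  set c : ℝ := ‖V.det‖ ^ (-(s / (n : ℝ))) with hc
  have hVpos : 0 < ‖V.det‖ := norm_pos_iff.mpr hV.ne_zero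
  have hcpos : 0 < c := Real.rpow_pos_of_pos hVpos _
  set B : ℝ := lam ^ (-s) * (∫ r : ℝ, ρ r) + 2 * lam ^ (1 - s) / (1 - s) * Cinf with hB
  have hroot := fun j : Fin n =>
    root_bound ρ hρmeas hρint hρnonneg Cinf hCinf s lam ⟨hs0, hs1⟩ hlam (x j)
  set g : ℝ → ℝ := fun r => c * ((n : ℝ)⁻¹ * ∑ j, |r - x j| ^ (-s) * ρ r) with hg
  have hgint : Integrable g := by
    refine (Integrable.const_mul (Integrable.const_mul ?_ _) _)
    exact integrable_finset_sum _ fun j _ => (hroot j).1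
  have hae : ∀ᵐ r ∂(volume : Measure ℝ), ∀ j, r ≠ x j := by
    rw [MeasureTheory.ae_all_iff]
    intro j
    rw [MeasureTheory.ae_iff]
    have : {a : ℝ | ¬ a ≠ x j} = {x j} := by ext a; simp
    rw [this]
    exact measure_singleton _
  have hptwise : ∀ᵐ (r : ℝ) ∂(volume : Measure ℝ),
      ‖(A + (r : ℂ) • V).det‖ ^ (-(s / (n : ℝ))) * ρ r ≤ g r := by
    filter_upwards [hae] with r hr
    have hprodpos : 0 < ∏ j, |r - x j| :=
      Finset.prod_pos fun j _ => abs_pos.mpr (sub_ne_zero.mpr (hr j))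
    have hbpos : 0 < ‖V.det‖ * ∏ j, |r - x j| := mul_pos hVpos hprodpos
    have step1 : ‖(A + (r : ℂ) • V).det‖ ^ (-(s / (n : ℝ)))
        ≤ (‖V.det‖ * ∏ j, |r - x j|) ^ (-(s / (n : ℝ))) :=
      Real.rpow_le_rpow_of_nonpos hbpos (hx r)
        (neg_nonpos.mpr (div_nonneg hs0.le hn'.le))
    have step2 : (‖V.det‖ * ∏ j, |r - x j|) ^ (-(s / (n : ℝ)))
        = c * ∏ j, |r - x j| ^ (-(s / (n : ℝ))) := by
      rw [Real.mul_rpow hVpos.le hprodpos.le, hc]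
      congr 1
      exact (Real.finset_prod_rpow _ _ (fun j _ => abs_nonneg _) _).symm
    have hrw : ∀ j, |r - x j| ^ (-(s / (n : ℝ))) = (|r - x j| ^ (-s)) ^ ((n : ℝ)⁻¹) := by
      intro j
      rw [← Real.rpow_mul (abs_nonneg _)]
      congr 1
      field_simp
    have step3 : ∏ j, |r - x j| ^ (-(s / (n : ℝ)))
        ≤ ∑ j, (n : ℝ)⁻¹ * (|r - x j| ^ (-s)) := by
      have := Real.geom_mean_le_arith_mean_weighted Finset.univ
        (fun _ : Fin n => (n : ℝ)⁻¹) (fun j => |r - x j| ^ (-s))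
        (fun _ _ => by positivity)
        (by
          rw [Finset.sum_const, Finset.card_univ, Fintype.card_fin, nsmul_eq_mul]
          field_simp)
        (fun j _ => Real.rpow_nonneg (abs_nonneg _) _)
      calc ∏ j, |r - x j| ^ (-(s / (n : ℝ)))
          = ∏ j, (|r - x j| ^ (-s)) ^ ((n : ℝ)⁻¹) := by
            exact Finset.prod_congr rfl fun j _ => hrw j
        _ ≤ ∑ j, (n : ℝ)⁻¹ * (|r - x j| ^ (-s)) := this
    have hρr := hρnonneg r
    calc ‖(A + (r : ℂ) • V).det‖ ^ (-(s / (n : ℝ))) * ρ r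
        ≤ (c * ∏ j, |r - x j| ^ (-(s / (n : ℝ)))) * ρ r := by
          rw [← step2]
          exact mul_le_mul_of_nonneg_right step1 hρr
      _ ≤ (c * ∑ j, (n : ℝ)⁻¹ * (|r - x j| ^ (-s))) * ρ r := by
          refine mul_le_mul_of_nonneg_right
            (mul_le_mul_of_nonneg_left step3 hcpos.le) hρr
      _ = g r := by
          rw [hg]
          simp only [Finset.mul_sum, Finset.sum_mul]
          exact Finset.sum_congr rfl fun j _ => by ring
  have hnonneg : ∀ᵐ (r : ℝ) ∂(volume : Measure ℝ),
      0 ≤ ‖(A + (r : ℂ) • V).det‖ ^ (-(s / (n : ℝ))) * ρ r :=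
    Filter.Eventually.of_forall fun r =>
      mul_nonneg (Real.rpow_nonneg (norm_nonneg _) _) (hρnonneg r)
  calc ∫ r : ℝ, ‖(A + (r : ℂ) • V).det‖ ^ (-(s / (n : ℝ))) * ρ r
      ≤ ∫ r : ℝ, g r := integral_mono_of_nonneg hnonneg hgint hptwise
    _ = c * ((n : ℝ)⁻¹ * ∑ j, ∫ r : ℝ, |r - x j| ^ (-s) * ρ r) := by
        rw [hg]
        simp only
        rw [integral_const_mul, integral_const_mul,
          integral_finset_sum _ fun j _ => (hroot j).1]
    _ ≤ c * ((n : ℝ)⁻¹ * ∑ _j : Fin n, B) := by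
        refine mul_le_mul_of_nonneg_left (mul_le_mul_of_nonneg_left ?_ (by positivity)) hcpos.le
        exact Finset.sum_le_sum fun j _ => (hroot j).2
    _ = c * B := by
        rw [Finset.sum_const, Finset.card_univ, Fintype.card_fin, nsmul_eq_mul]
        field_simp
end

section
/- Let u : ℤ^d → ℝ have finite support Θ with 0 ∈ Θ, and suppose ū := ∑_{k∈ℤ^d} u(k) > 0. Let n := max_{i,j∈Θ}|i-j|₁, c := (1/n)·ln(1 + ū/(2‖u‖_{ℓ¹})), and for fixed x, y ∈ ℤ^d, α(k) := (1/2)(e^{-c|k-x|₁} + e^{-c|k-y|₁}). Define W(k) := ∑_{j∈ℤ^d} α(j) u(k-j). Then W(k) ≥ α(k)·ū/2 > 0 for all k ∈ ℤ^d; in particular W(k) ≥ ū/4 for k ∈ {x,y}. -/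
noncomputable def alphaWt (d : ℕ) (c : ℝ) (x y : Fin d → ℤ) (k : Fin d → ℤ) : ℝ :=
  (1 / 2) * (Real.exp (-c * ((∑ i, |k i - x i| : ℤ) : ℝ))
    + Real.exp (-c * ((∑ i, |k i - y i| : ℤ) : ℝ)))

lemma exp_lip {c a b B : ℝ} (hc : 0 ≤ c) (hab : |a - b| ≤ B) :
    |Real.exp (-c * a) - Real.exp (-c * b)| ≤ Real.exp (-c * b) * (Real.exp (c * B) - 1) := by
  have h1 : Real.exp (-c * a) = Real.exp (-c * b) * Real.exp (c * (b - a)) := by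
    rw [← Real.exp_add]; ring_nf
  have ht : |c * (b - a)| ≤ c * B := by
    rw [abs_mul, abs_of_nonneg hc]
    exact mul_le_mul_of_nonneg_left (abs_sub_comm a b ▸ hab) hc
  have h2 : |Real.exp (c * (b - a)) - 1| ≤ Real.exp (c * B) - 1 := by
    rcases abs_le.mp ht with ⟨hl, hr⟩
    rw [abs_le]
    constructor
    · nlinarith [Real.add_one_le_exp (c * (b - a)), Real.add_one_le_exp (c * B)]
    · nlinarith [Real.exp_le_exp.mpr hr]
  calc |Real.exp (-c * a) - Real.exp (-c * b)|
      = Real.exp (-c * b) * |Real.exp (c * (b - a)) - 1| := by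
        rw [h1]
        rw [show Real.exp (-c*b) * Real.exp (c*(b-a)) - Real.exp (-c*b)
            = Real.exp (-c*b) * (Real.exp (c*(b-a)) - 1) by ring,
          abs_mul, abs_of_pos (Real.exp_pos _)]
    _ ≤ Real.exp (-c * b) * (Real.exp (c * B) - 1) :=
        mul_le_mul_of_nonneg_left h2 (Real.exp_pos _).le

lemma alpha_lip (d n : ℕ) (c : ℝ) (hc : 0 ≤ c) (x y k m : Fin d → ℤ)
    (hm : (∑ t, |m t| : ℤ) ≤ (n : ℤ)) :
    |alphaWt d c x y (k - m) - alphaWt d c x y k|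
      ≤ alphaWt d c x y k * (Real.exp (c * n) - 1) := by
  have key : ∀ z : Fin d → ℤ,
      |((∑ i, |(k - m) i - z i| : ℤ) : ℝ) - ((∑ i, |k i - z i| : ℤ) : ℝ)| ≤ (n : ℝ) := by
    intro z
    have hZ : |(∑ i, |(k - m) i - z i| : ℤ) - (∑ i, |k i - z i| : ℤ)| ≤ (n : ℤ) := by
      rw [← Finset.sum_sub_distrib]
      calc |∑ i, (|(k - m) i - z i| - |k i - z i|)|
          ≤ ∑ i, |(|(k - m) i - z i| - |k i - z i|)| := Finset.abs_sum_le_sum_abs _ _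
        _ ≤ ∑ i, |m i| := by
            apply Finset.sum_le_sum
            intro i _
            have h := abs_abs_sub_abs_le_abs_sub ((k - m) i - z i) (k i - z i)
            have he : (k - m) i - z i - (k i - z i) = -m i := by
              simp [Pi.sub_apply]
            rw [he, abs_neg] at h
            exact h
        _ ≤ (n : ℤ) := hm
    rw [← Int.cast_sub, ← Int.cast_abs]
    exact_mod_cast hZ
  unfold alphaWt
  have h1 := exp_lip hc (key x)
  have h2 := exp_lip hc (key y)
  have e1 := (Real.exp_pos (-c * ((∑ i, |k i - x i| : ℤ) : ℝ))).le
  have e2 := (Real.exp_pos (-c * ((∑ i, |k i - y i| : ℤ) : ℝ))).le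
  rw [abs_le] at h1 h2 ⊢
  constructor <;> nlinarith [h1.1, h1.2, h2.1, h2.2]

theorem smoothed_single_site_potential_positive
    (d : ℕ) (u : (Fin d → ℤ) → ℝ) (hfin : (Function.support u).Finite)
    (h0 : u 0 ≠ 0) (hubar : 0 < ∑' k, u k)
    (n : ℕ) (hn0 : 0 < n)
    (hdiam : ∀ i j, u i ≠ 0 → u j ≠ 0 → (∑ t, |i t - j t| : ℤ) ≤ (n : ℤ))
    (hdiam_max : ∃ i j, u i ≠ 0 ∧ u j ≠ 0 ∧ (∑ t, |i t - j t| : ℤ) = (n : ℤ))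
    (x y : Fin d → ℤ) :
    (∀ k, alphaWt d ((1 / (n : ℝ)) * Real.log (1 + (∑' k, u k) / (2 * ∑' k, |u k|))) x y k
          * ((∑' k, u k) / 2)
        ≤ ∑' j, alphaWt d ((1 / (n : ℝ)) * Real.log (1 + (∑' k, u k) / (2 * ∑' k, |u k|))) x y j
            * u (k - j)
      ∧ 0 < alphaWt d ((1 / (n : ℝ)) * Real.log (1 + (∑' k, u k) / (2 * ∑' k, |u k|))) x y k
          * ((∑' k, u k) / 2))
    ∧ (∀ k, k = x ∨ k = y →
        (∑' j, u j) / 4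
          ≤ ∑' j, alphaWt d ((1 / (n : ℝ)) * Real.log (1 + (∑' k, u k) / (2 * ∑' k, |u k|))) x y j
              * u (k - j)) := by
  classical
  set s : Finset (Fin d → ℤ) := hfin.toFinset with hs
  have hmem : ∀ m, m ∈ s ↔ u m ≠ 0 := by
    intro m; simp [hs, Set.Finite.mem_toFinset, Function.mem_support]
  have hUeq : (∑' k, u k) = ∑ m ∈ s, u m :=
    tsum_eq_sum (fun m hm => by simpa using (hmem m).not.mp hm)
  have hSeq : (∑' k, |u k|) = ∑ m ∈ s, |u m| :=
    tsum_eq_sum (fun m hm => by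
      have : u m = 0 := by simpa using (hmem m).not.mp hm
      simp [this])
  set U : ℝ := ∑ m ∈ s, u m with hUdef
  set S : ℝ := ∑ m ∈ s, |u m| with hSdef
  have hU : 0 < U := hUeq ▸ hubar
  have h0s : (0 : Fin d → ℤ) ∈ s := (hmem 0).mpr h0
  have hS : 0 < S := by
    have h1 : |u 0| ≤ S := Finset.single_le_sum (f := fun m => |u m|)
      (fun m _ => abs_nonneg _) h0s
    have : 0 < |u 0| := abs_pos.mpr h0
    linarith
  rw [hUeq, hSeq]
  set c : ℝ := (1 / (n : ℝ)) * Real.log (1 + U / (2 * S)) with hcdef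
  have hn' : (0 : ℝ) < n := by exact_mod_cast hn0
  have hlog : 0 ≤ Real.log (1 + U / (2 * S)) :=
    Real.log_nonneg (by nlinarith [div_nonneg hU.le (by linarith : (0:ℝ) ≤ 2 * S)])
  have hc : 0 ≤ c := by
    apply mul_nonneg (by positivity) hlog
  have hF : Real.exp (c * n) - 1 = U / (2 * S) := by
    have hcn : c * n = Real.log (1 + U / (2 * S)) := by
      rw [hcdef]; field_simp
    rw [hcn, Real.exp_log (by positivity)]
    ring
  -- W as finite sum
  have hW : ∀ k, (∑' j, alphaWt d c x y j * u (k - j))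
      = ∑ m ∈ s, alphaWt d c x y (k - m) * u m := by
    intro k
    rw [← (Equiv.subLeft k).tsum_eq (fun j => alphaWt d c x y j * u (k - j))]
    simp only [Equiv.subLeft_apply, sub_sub_cancel]
    exact tsum_eq_sum (fun m hm => by
      have : u m = 0 := by simpa using (hmem m).not.mp hm
      simp [this])
  have hmn : ∀ m ∈ s, (∑ t, |m t| : ℤ) ≤ (n : ℤ) := by
    intro m hm
    have := hdiam m 0 ((hmem m).mp hm) h0
    simpa using this
  -- main bound
  have main : ∀ k, alphaWt d c x y k * (U / 2)
      ≤ ∑' j, alphaWt d c x y j * u (k - j) := by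
    intro k
    rw [hW k]
    set a : ℝ := alphaWt d c x y k with hadef
    have ha : 0 < a := by rw [hadef]; unfold alphaWt; positivity
    have hsplit : ∑ m ∈ s, alphaWt d c x y (k - m) * u m
        = a * U + ∑ m ∈ s, (alphaWt d c x y (k - m) - a) * u m := by
      rw [hUdef, Finset.mul_sum, ← Finset.sum_add_distrib]
      exact Finset.sum_congr rfl (fun m _ => by ring)
    have hR : |∑ m ∈ s, (alphaWt d c x y (k - m) - a) * u m| ≤ a * (U / 2) := by
      calc |∑ m ∈ s, (alphaWt d c x y (k - m) - a) * u m|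
          ≤ ∑ m ∈ s, |(alphaWt d c x y (k - m) - a) * u m| :=
            Finset.abs_sum_le_sum_abs _ _
        _ ≤ ∑ m ∈ s, (a * (Real.exp (c * n) - 1)) * |u m| := by
            apply Finset.sum_le_sum
            intro m hm
            rw [abs_mul]
            exact mul_le_mul_of_nonneg_right
              (alpha_lip d n c hc x y k m (hmn m hm)) (abs_nonneg _)
        _ = a * (Real.exp (c * n) - 1) * S := by rw [← Finset.mul_sum]
        _ = a * (U / 2) := by rw [hF]; field_simp
    have := neg_abs_le (∑ m ∈ s, (alphaWt d c x y (k - m) - a) * u m)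
    rw [hsplit]
    nlinarith [ha, hU]
  constructor
  · intro k
    refine ⟨main k, ?_⟩
    have ha : 0 < alphaWt d c x y k := by unfold alphaWt; positivity
    positivity
  · intro k hk
    have hax : (1 : ℝ) / 2 ≤ alphaWt d c x y k := by
      rcases hk with rfl | rfl
      · unfold alphaWt
        have : ∀ i, |k i - k i| = (0 : ℤ) := fun i => by simp
        simp only [this, Finset.sum_const_zero, Int.cast_zero, mul_zero, Real.exp_zero]
        nlinarith [Real.exp_pos (-c * ((∑ i, |k i - y i| : ℤ) : ℝ))]
      · unfold alphaWt
        have : ∀ i, |k i - k i| = (0 : ℤ) := fun i => by simp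
        simp only [this, Finset.sum_const_zero, Int.cast_zero, mul_zero, Real.exp_zero]
        nlinarith [Real.exp_pos (-c * ((∑ i, |k i - x i| : ℤ) : ℝ))]
    have := main k
    have hU2 : 0 < U / 2 := by positivity
    calc U / 4 = (1 / 2) * (U / 2) := by ring
      _ ≤ alphaWt d c x y k * (U / 2) := mul_le_mul_of_nonneg_right hax hU2.le
      _ ≤ _ := main k
end
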